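/- Suppose 0 < d < 1, 0 < w < 1, t > 0, 0 < τ < t, c > 0, p > 0. If ((1-d)(pt - ct) + d(-cτ))/(1 - (1-d)w) ≥ ((1-d)((pt - cτ) + w^{j-1}(-c(t-τ))) + d(-cτ))/(1 - (1-d)w^j) for some integer j > 1, then w ≥ (1 - τ/t)/((1-d)p/c - τ/t). -/

import Mathlib

theorem sp_cooperation_condition
    (d w t τ c p : ℝ) (j : ℕ)
    (hd0 : 0 < d) (hd1 : d < 1) (hw0 : 0 < w) (hw1 : w < 1)
    (ht : 0 < t) (hτ0 : 0 < τ) (hτt : τ < t) (hc : 0 < c) (hp : 0 < p)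
    (hj : 1 < j)
    (h : ((1 - d) * (p * t - c * t) + d * (-(c * τ))) / (1 - (1 - d) * w) ≥
      ((1 - d) * ((p * t - c * τ) + w ^ (j - 1) * (-(c * (t - τ)))) + d * (-(c * τ))) /
        (1 - (1 - d) * w ^ j)) :
    w ≥ (1 - τ / t) / ((1 - d) * p / c - τ / t) := by
  obtain ⟨m, rfl⟩ : ∃ m, j = m + 1 := ⟨j - 1, (Nat.succ_pred_eq_of_pos (by omega)).symm⟩
  have hm : 1 ≤ m := by omega
  simp only [Nat.add_sub_cancel] at h
  have ha : 0 < 1 - d := by linarith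
  have hwm0 : 0 < w ^ m := pow_pos hw0 m
  have hwm1 : w ^ m < 1 := pow_lt_one₀ hw0.le hw1 (by omega)
  have hwj : w ^ (m + 1) = w ^ m * w := pow_succ w m
  have hD1 : 0 < 1 - (1 - d) * w := by nlinarith
  have hD2 : 0 < 1 - (1 - d) * w ^ (m + 1) := by
    rw [hwj]; nlinarith
  rw [ge_iff_le, div_le_div_iff₀ hD2 hD1] at h
  rw [hwj] at h
  -- key inequality
  have key : c * (t - τ) ≤ w * ((1 - d) * p * t - c * τ) := by
    nlinarith [mul_pos ha (sub_pos.mpr hwm1)]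
  have hpos : 0 < (1 - d) * p * t - c * τ := by
    have hct : 0 < c * (t - τ) := mul_pos hc (by linarith)
    nlinarith
  have hden : 0 < (1 - d) * p / c - τ / t := by
    rw [sub_pos, div_lt_div_iff₀ ht hc]
    nlinarith
  have ht' := ht.ne'
  have hc' := hc.ne'
  have h1 : (1 - τ / t) * (c * t) = c * (t - τ) := by field_simp
  have h2 : (w * ((1 - d) * p / c - τ / t)) * (c * t) = w * ((1 - d) * p * t - c * τ) := by
    field_simp
  rw [ge_iff_le, div_le_iff₀ hden, ← mul_le_mul_iff_of_pos_right (mul_pos hc ht), h1, h2]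
  exact key
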